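/- Rearrangement inequality for nonnegative functions on [0,1]²: if W, U : [0,1]² → [0,∞) are measurable with W ∈ L^p, U ∈ L^{p'} (1/p + 1/p' = 1), then E[W·U] ≤ E[W*·U*], where W*(x₁,x₂) = sup{ t ∈ ℝ : Pr[W > t] > max(x₁,x₂)² } is the (symmetric two-variable) monotone rearrangement and E denotes integration over [0,1]². -/

import Mathlib

open MeasureTheory

/-- `Pr[W > t]`: Lebesgue measure of the super-level set within `[0,1]²`. -/
noncomputable def levelPr (W : ℝ × ℝ → ℝ) (t : ℝ) : ℝ :=
  (volume ((Set.Icc (0:ℝ) 1 ×ˢ Set.Icc (0:ℝ) 1) ∩ {z | t < W z})).toReal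

/-- The symmetric two-variable monotone rearrangement
`W*(x₁,x₂) = sup{ t : Pr[W > t] > max(x₁,x₂)² }`. -/
noncomputable def rearr (W : ℝ × ℝ → ℝ) (z : ℝ × ℝ) : ℝ :=
  sSup {t : ℝ | levelPr W t > (max z.1 z.2)^2}

namespace Stmt15Aux

open Set Filter ENNReal

/-- The unit square. -/
def Q : Set (ℝ × ℝ) := Set.Icc (0:ℝ) 1 ×ˢ Set.Icc (0:ℝ) 1

/-- The measure of the super-level set, as an extended nonnegative real. -/
noncomputable def muf (f : ℝ × ℝ → ℝ) (t : ℝ) : ℝ≥0∞ := volume (Q ∩ {z | t < f z})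

lemma measQ : MeasurableSet Q := measurableSet_Icc.prod measurableSet_Icc

lemma volQ : volume Q = 1 := by
  rw [Q, Measure.volume_eq_prod, Measure.prod_prod, Real.volume_Icc]
  norm_num

lemma levelPr_eq (f : ℝ × ℝ → ℝ) (t : ℝ) : levelPr f t = (muf f t).toReal := rfl

lemma muf_le_one (f : ℝ × ℝ → ℝ) (t : ℝ) : muf f t ≤ 1 := by
  rw [← volQ]; exact measure_mono inter_subset_left

lemma muf_ne_top (f : ℝ × ℝ → ℝ) (t : ℝ) : muf f t ≠ ⊤ :=
  ((muf_le_one f t).trans_lt one_lt_top).ne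

lemma muf_anti (f : ℝ × ℝ → ℝ) : Antitone (muf f) := fun s t hst =>
  measure_mono (inter_subset_inter_right _ fun z hz => lt_of_le_of_lt hst hz)

lemma levelPr_nonneg (f : ℝ × ℝ → ℝ) (t : ℝ) : 0 ≤ levelPr f t := ENNReal.toReal_nonneg

lemma levelPr_le_one (f : ℝ × ℝ → ℝ) (t : ℝ) : levelPr f t ≤ 1 := by
  rw [levelPr_eq]
  have := ENNReal.toReal_mono (by simp) (muf_le_one f t)
  simpa using this

lemma levelPr_anti (f : ℝ × ℝ → ℝ) : Antitone (levelPr f) := fun s t h =>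
  ENNReal.toReal_mono (muf_ne_top f s) (muf_anti f h)

lemma levelPr_of_neg {f : ℝ × ℝ → ℝ} (hfnn : ∀ z, 0 ≤ f z) {t : ℝ} (ht : t < 0) :
    levelPr f t = 1 := by
  have h : Q ∩ {z | t < f z} = Q := inter_eq_left.2 fun z _ => lt_of_lt_of_le ht (hfnn z)
  rw [levelPr_eq, muf, h, volQ, ENNReal.toReal_one]

lemma lt_levelPr_iff {f : ℝ × ℝ → ℝ} {a t : ℝ} (ha : 0 ≤ a) :
    a < levelPr f t ↔ ENNReal.ofReal a < muf f t := by
  rw [levelPr_eq]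
  exact (ENNReal.ofReal_lt_iff_lt_toReal ha (muf_ne_top f t)).symm

lemma exists_muf_lt {f : ℝ × ℝ → ℝ} (hf : Measurable f) {ε : ℝ≥0∞} (hε : 0 < ε) :
    ∃ n : ℕ, muf f n < ε := by
  have hmono : Antitone (fun n : ℕ => Q ∩ {z | (n : ℝ) < f z}) := by
    intro n m h z hz
    exact ⟨hz.1, show (n : ℝ) < f z from lt_of_le_of_lt (by exact_mod_cast h) hz.2⟩
  have hinter : ⋂ n : ℕ, (Q ∩ {z | (n : ℝ) < f z}) = ∅ := by
    ext z
    simp only [mem_iInter, mem_empty_iff_false, iff_false, not_forall]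
    obtain ⟨n, hn⟩ := exists_nat_gt (f z)
    exact ⟨n, fun h => absurd h.2 (not_lt.2 hn.le)⟩
  have htend := tendsto_measure_iInter_atTop (μ := volume)
    (fun n => (measQ.inter (measurableSet_lt measurable_const hf)).nullMeasurableSet)
    hmono ⟨0, muf_ne_top f ((0:ℕ):ℝ)⟩
  rw [hinter, measure_empty] at htend
  exact (htend.eventually_lt_const hε).exists

lemma bddAbove_S {f : ℝ × ℝ → ℝ} (hf : Measurable f) {a : ℝ} (ha : 0 < a) :
    BddAbove {t : ℝ | levelPr f t > a} := by
  obtain ⟨n, hn⟩ := exists_muf_lt hf (ε := ENNReal.ofReal a) (by simpa using ha)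
  refine ⟨n, fun u hu => ?_⟩
  by_contra h
  push_neg at h
  have h1 : muf f u ≤ muf f n := muf_anti f h.le
  have h2 : levelPr f u < a :=
    (ENNReal.lt_ofReal_iff_toReal_lt (muf_ne_top f u)).1 (lt_of_le_of_lt h1 hn)
  exact absurd hu (not_lt.2 h2.le)

lemma exists_right {f : ℝ × ℝ → ℝ} (hf : Measurable f) {t a : ℝ} (ha : 0 ≤ a)
    (h : a < levelPr f t) : ∃ s, t < s ∧ a < levelPr f s := by
  have hmono : Monotone (fun n : ℕ => Q ∩ {z | t + 1 / ((n : ℝ) + 1) < f z}) := by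
    intro n m hnm z hz
    have h1 : (1 : ℝ) / ((m : ℝ) + 1) ≤ 1 / ((n : ℝ) + 1) := by
      apply one_div_le_one_div_of_le
      · positivity
      · have : (n : ℝ) ≤ m := by exact_mod_cast hnm
        linarith
    have hz2 : t + 1 / ((n : ℝ) + 1) < f z := hz.2
    exact ⟨hz.1, show t + 1 / ((m : ℝ) + 1) < f z by linarith⟩
  have huni : ⋃ n : ℕ, (Q ∩ {z | t + 1 / ((n : ℝ) + 1) < f z}) = Q ∩ {z | t < f z} := by
    ext z
    simp only [mem_iUnion, mem_inter_iff, mem_setOf_eq]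
    constructor
    · rintro ⟨n, hQ, hz⟩
      have : (0 : ℝ) < 1 / ((n : ℝ) + 1) := by positivity
      exact ⟨hQ, by linarith⟩
    · rintro ⟨hQ, hz⟩
      obtain ⟨n, hn⟩ := exists_nat_one_div_lt (sub_pos.2 hz)
      exact ⟨n, hQ, by push_cast at hn ⊢; linarith⟩
  have htend := tendsto_measure_iUnion_atTop (μ := volume) hmono
  rw [huni] at htend
  have h' : ENNReal.ofReal a < muf f t := (lt_levelPr_iff ha).1 h
  obtain ⟨n, hn⟩ := (htend.eventually_const_lt h').exists
  refine ⟨t + 1 / ((n : ℝ) + 1), ?_, (lt_levelPr_iff ha).2 hn⟩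
  have : (0:ℝ) < 1 / ((n : ℝ) + 1) := by positivity
  linarith

/-- The decreasing profile. -/
noncomputable def hfun (f : ℝ × ℝ → ℝ) (a : ℝ) : ℝ := sSup {t : ℝ | levelPr f t > a}

lemma rearr_eq_hfun (f : ℝ × ℝ → ℝ) (z : ℝ × ℝ) : rearr f z = hfun f ((max z.1 z.2)^2) := rfl

lemma S_empty_of_one_le {f : ℝ × ℝ → ℝ} {a : ℝ} (h : 1 ≤ a) :
    {t : ℝ | levelPr f t > a} = ∅ := by
  ext t
  simp only [mem_setOf_eq, mem_empty_iff_false, iff_false, not_lt]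
  exact (levelPr_le_one f t).trans h

lemma hfun_nonneg {f : ℝ × ℝ → ℝ} (hfnn : ∀ z, 0 ≤ f z) {a : ℝ} (ha : 0 ≤ a) :
    0 ≤ hfun f a := by
  rcases le_or_gt 1 a with h1 | h1
  · rw [hfun, S_empty_of_one_le h1, Real.sSup_empty]
  rcases em (BddAbove {t : ℝ | levelPr f t > a}) with hb | hb
  swap
  · rw [hfun, Real.sSup_of_not_bddAbove hb]
  refine le_of_forall_lt fun c hc => ?_
  have hmem : c / 2 ∈ {t : ℝ | levelPr f t > a} := by
    have h2 : levelPr f (c / 2) = 1 := levelPr_of_neg hfnn (by linarith)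
    simpa [h2] using h1
  exact lt_of_lt_of_le (by linarith) (le_csSup hb hmem)

lemma hfun_le {f : ℝ × ℝ → ℝ} (hf : Measurable f) (hfnn : ∀ z, 0 ≤ f z) {a b : ℝ}
    (ha : 0 < a) (hab : a ≤ b) : hfun f b ≤ hfun f a := by
  rcases eq_empty_or_nonempty {t : ℝ | levelPr f t > b} with he | hne
  · rw [hfun, he, Real.sSup_empty]
    exact hfun_nonneg hfnn ha.le
  · exact csSup_le_csSup (bddAbove_S hf ha) hne fun t ht => lt_of_le_of_lt hab ht

/-- A measurable modification of the profile composed with max. -/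
noncomputable def phi (f : ℝ × ℝ → ℝ) (x : ℝ) : ℝ := if x ≤ 0 then 0 else hfun f (x^2)

lemma measurable_phi {f : ℝ × ℝ → ℝ} (hf : Measurable f) (hfnn : ∀ z, 0 ≤ f z) :
    Measurable (phi f) := by
  apply measurable_of_Ioi
  intro c
  have hrw : phi f ⁻¹' Ioi c =
      ((if c < 0 then Iic (0:ℝ) else ∅) ∪ {x : ℝ | 0 < x ∧ c < hfun f (x^2)}) := by
    ext x
    simp only [mem_preimage, mem_Ioi, mem_union, mem_setOf_eq, phi]
    by_cases hx : x ≤ 0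
    · rw [if_pos hx]
      constructor
      · intro hc
        left
        rw [if_pos hc]
        exact hx
      · rintro (h | h)
        · by_cases hc : c < 0
          · exact hc
          · rw [if_neg hc] at h
            exact absurd h (notMem_empty x)
        · exact absurd hx (not_le.2 h.1)
    · rw [if_neg hx]
      push_neg at hx
      constructor
      · intro hc; right; exact ⟨hx, hc⟩
      · rintro (h | h)
        · by_cases hc : c < 0
          · rw [if_pos hc] at h
            exact absurd (mem_Iic.1 h) (not_le.2 hx)
          · rw [if_neg hc] at h
            exact absurd h (notMem_empty x)
        · exact h.2
  rw [hrw]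
  refine MeasurableSet.union (by split <;> simp) ?_
  have hoc : OrdConnected {x : ℝ | 0 < x ∧ c < hfun f (x^2)} := by
    constructor
    intro x hx y hy z hz
    have hx0 : 0 < z := lt_of_lt_of_le hx.1 hz.1
    refine ⟨hx0, lt_of_lt_of_le hy.2 (hfun_le hf hfnn (by positivity) ?_)⟩
    have : z ≤ y := hz.2
    nlinarith [hx0.le]
  exact hoc.measurableSet

/-- Measurable version of `rearr` (differs from `rearr` only where `max z.1 z.2 ≤ 0`). -/
noncomputable def rearr' (f : ℝ × ℝ → ℝ) (z : ℝ × ℝ) : ℝ := phi f (max z.1 z.2)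

lemma measurable_rearr' {f : ℝ × ℝ → ℝ} (hf : Measurable f) (hfnn : ∀ z, 0 ≤ f z) :
    Measurable (rearr' f) :=
  (measurable_phi hf hfnn).comp (measurable_fst.max measurable_snd)

lemma rearr'_nonneg {f : ℝ × ℝ → ℝ} (hfnn : ∀ z, 0 ≤ f z) (z : ℝ × ℝ) :
    0 ≤ rearr' f z := by
  rw [rearr', phi]
  split
  · exact le_refl _
  · exact hfun_nonneg hfnn (sq_nonneg _)

lemma rearr'_eq {f : ℝ × ℝ → ℝ} {z : ℝ × ℝ} (h : ¬ max z.1 z.2 ≤ 0) :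
    rearr' f z = rearr f z := by
  rw [rearr', phi, if_neg h, rearr_eq_hfun]

/-- Upper sandwich for the super-level set of `rearr'`. -/
lemma sub1 {f : ℝ × ℝ → ℝ} {s : ℝ} (hs : 0 < s) :
    Q ∩ {z | s < rearr' f z} ⊆
      Ico (0:ℝ) (Real.sqrt (levelPr f s)) ×ˢ Ico (0:ℝ) (Real.sqrt (levelPr f s)) := by
  rintro z ⟨hzQ, hz⟩
  simp only [mem_setOf_eq] at hz
  have hz1 : z.1 ∈ Icc (0:ℝ) 1 := hzQ.1
  have hz2 : z.2 ∈ Icc (0:ℝ) 1 := hzQ.2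
  set m := max z.1 z.2 with hm
  have hm0 : 0 ≤ m := le_trans hz1.1 (le_max_left _ _)
  have hmpos : ¬ m ≤ 0 := by
    intro hneg
    rw [rearr', phi, if_pos hneg] at hz
    exact absurd hz (not_lt.2 hs.le)
  rw [rearr', phi, if_neg hmpos] at hz
  have hne : {t : ℝ | levelPr f t > m^2}.Nonempty := by
    rcases eq_empty_or_nonempty {t : ℝ | levelPr f t > m^2} with he | hne
    · rw [hfun, he, Real.sSup_empty] at hz
      exact absurd hz (not_lt.2 hs.le)
    · exact hne
  obtain ⟨s', hs'S, hss'⟩ := exists_lt_of_lt_csSup hne hz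
  have hlev : m^2 < levelPr f s := lt_of_lt_of_le hs'S (levelPr_anti f hss'.le)
  have hmr : m < Real.sqrt (levelPr f s) := (Real.lt_sqrt hm0).2 hlev
  exact ⟨⟨hz1.1, lt_of_le_of_lt (le_max_left _ _) hmr⟩,
         ⟨hz2.1, lt_of_le_of_lt (le_max_right _ _) hmr⟩⟩

/-- Lower sandwich for the super-level set of `rearr'`. -/
lemma sub2 {f : ℝ × ℝ → ℝ} (hf : Measurable f) {s : ℝ} (hs : 0 < s) :
    Ioo (0:ℝ) (Real.sqrt (levelPr f s)) ×ˢ Ioo (0:ℝ) (Real.sqrt (levelPr f s)) ⊆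
      Q ∩ {z | s < rearr' f z} := by
  rintro z ⟨hz1, hz2⟩
  simp only [mem_Ioo] at hz1 hz2
  have hr1 : Real.sqrt (levelPr f s) ≤ 1 := Real.sqrt_le_one.2 (levelPr_le_one f s)
  have hzQ : z ∈ Q :=
    ⟨⟨hz1.1.le, hz1.2.le.trans hr1⟩, ⟨hz2.1.le, hz2.2.le.trans hr1⟩⟩
  set m := max z.1 z.2 with hm
  have hmpos : 0 < m := lt_of_lt_of_le hz1.1 (le_max_left _ _)
  have hmr : m < Real.sqrt (levelPr f s) := max_lt hz1.2 hz2.2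
  have hlev : m^2 < levelPr f s := (Real.lt_sqrt hmpos.le).1 hmr
  obtain ⟨s', hss', ha⟩ := exists_right hf (sq_nonneg m) hlev
  refine ⟨hzQ, ?_⟩
  simp only [mem_setOf_eq]
  rw [rearr', phi, if_neg (not_le.2 hmpos)]
  exact lt_of_lt_of_le hss' (le_csSup (bddAbove_S hf (by positivity)) ha)

lemma vol_Ico_prod (r : ℝ) :
    volume (Ico (0:ℝ) r ×ˢ Ico (0:ℝ) r) = ENNReal.ofReal r * ENNReal.ofReal r := by
  simp [Measure.volume_eq_prod, Measure.prod_prod, Real.volume_Ico]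

lemma vol_Ioo_prod (r : ℝ) :
    volume (Ioo (0:ℝ) r ×ˢ Ioo (0:ℝ) r) = ENNReal.ofReal r * ENNReal.ofReal r := by
  simp [Measure.volume_eq_prod, Measure.prod_prod, Real.volume_Ioo]

lemma sq_sqrt_levelPr (f : ℝ × ℝ → ℝ) (s : ℝ) :
    ENNReal.ofReal (Real.sqrt (levelPr f s)) * ENNReal.ofReal (Real.sqrt (levelPr f s))
      = muf f s := by
  rw [← ENNReal.ofReal_mul (Real.sqrt_nonneg _),
    Real.mul_self_sqrt (levelPr_nonneg f s), levelPr_eq, ENNReal.ofReal_toReal (muf_ne_top f s)]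

lemma meas_superlevel {f : ℝ × ℝ → ℝ} (hf : Measurable f) {s : ℝ} (hs : 0 < s) :
    volume (Q ∩ {z | s < rearr' f z}) = muf f s := by
  refine le_antisymm ?_ ?_
  · calc volume (Q ∩ {z | s < rearr' f z})
        ≤ volume (Ico (0:ℝ) (Real.sqrt (levelPr f s)) ×ˢ Ico (0:ℝ) (Real.sqrt (levelPr f s))) :=
          measure_mono (sub1 hs)
      _ = muf f s := by rw [vol_Ico_prod, sq_sqrt_levelPr]
  · calc muf f s
        = volume (Ioo (0:ℝ) (Real.sqrt (levelPr f s)) ×ˢ Ioo (0:ℝ) (Real.sqrt (levelPr f s))) := by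
          rw [vol_Ioo_prod, sq_sqrt_levelPr]
      _ ≤ volume (Q ∩ {z | s < rearr' f z}) := measure_mono (sub2 hf hs)

lemma meas_superlevel₂ {f g : ℝ × ℝ → ℝ} (hf : Measurable f) (hg : Measurable g)
    {s t : ℝ} (hs : 0 < s) (ht : 0 < t) :
    volume (Q ∩ ({z | s < rearr' f z} ∩ {z | t < rearr' g z})) = min (muf f s) (muf g t) := by
  set r1 := Real.sqrt (levelPr f s) with hr1
  set r2 := Real.sqrt (levelPr g t) with hr2
  set rm := min r1 r2 with hrm
  have hkey : ENNReal.ofReal rm * ENNReal.ofReal rm = min (muf f s) (muf g t) := by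
    rcases le_total (levelPr f s) (levelPr g t) with h | h
    · have h1 : r1 ≤ r2 := Real.sqrt_le_sqrt h
      have h2 : muf f s ≤ muf g t := by
        rw [← ENNReal.ofReal_toReal (muf_ne_top f s), ← ENNReal.ofReal_toReal (muf_ne_top g t)]
        exact ENNReal.ofReal_le_ofReal h
      rw [hrm, min_eq_left h1, min_eq_left h2, hr1, sq_sqrt_levelPr]
    · have h1 : r2 ≤ r1 := Real.sqrt_le_sqrt h
      have h2 : muf g t ≤ muf f s := by
        rw [← ENNReal.ofReal_toReal (muf_ne_top f s), ← ENNReal.ofReal_toReal (muf_ne_top g t)]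
        exact ENNReal.ofReal_le_ofReal h
      rw [hrm, min_eq_right h1, min_eq_right h2, hr2, sq_sqrt_levelPr]
  refine le_antisymm ?_ ?_
  · calc volume (Q ∩ ({z | s < rearr' f z} ∩ {z | t < rearr' g z}))
        ≤ volume (Ico (0:ℝ) rm ×ˢ Ico (0:ℝ) rm) := by
          refine measure_mono ?_
          rintro z ⟨hQ, hzf, hzg⟩
          obtain ⟨ha, hb⟩ := sub1 hs ⟨hQ, hzf⟩
          obtain ⟨hc, hd⟩ := sub1 ht ⟨hQ, hzg⟩
          exact ⟨⟨ha.1, lt_min ha.2 hc.2⟩, ⟨hb.1, lt_min hb.2 hd.2⟩⟩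
      _ = min (muf f s) (muf g t) := by rw [vol_Ico_prod, hkey]
  · calc min (muf f s) (muf g t)
        = volume (Ioo (0:ℝ) rm ×ˢ Ioo (0:ℝ) rm) := by rw [vol_Ioo_prod, hkey]
      _ ≤ volume (Q ∩ ({z | s < rearr' f z} ∩ {z | t < rearr' g z})) := by
          refine measure_mono ?_
          rintro z ⟨hz1, hz2⟩
          simp only [mem_Ioo] at hz1 hz2
          have hf' := sub2 hf hs (show z ∈ Ioo (0:ℝ) r1 ×ˢ Ioo (0:ℝ) r1 from
            ⟨⟨hz1.1, lt_of_lt_of_le hz1.2 (min_le_left _ _)⟩,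
             ⟨hz2.1, lt_of_lt_of_le hz2.2 (min_le_left _ _)⟩⟩)
          have hg' := sub2 hg ht (show z ∈ Ioo (0:ℝ) r2 ×ˢ Ioo (0:ℝ) r2 from
            ⟨⟨hz1.1, lt_of_lt_of_le hz1.2 (min_le_right _ _)⟩,
             ⟨hz2.1, lt_of_lt_of_le hz2.2 (min_le_right _ _)⟩⟩)
          exact ⟨hf'.1, hf'.2, hg'.2⟩

/-- Layer-cake with a weight. -/
lemma swapA {A : Set (ℝ × ℝ)} (hA : MeasurableSet A) {f : ℝ × ℝ → ℝ} (hf : Measurable f)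
    {c : ℝ × ℝ → ℝ≥0∞} (hc : Measurable c) :
    ∫⁻ z in A, ENNReal.ofReal (f z) * c z =
      ∫⁻ s in Ioi (0:ℝ), ∫⁻ z in A ∩ {z | s < f z}, c z := by
  have hset : MeasurableSet {p : ℝ × (ℝ × ℝ) | p.1 < f p.2} :=
    measurableSet_lt measurable_fst (hf.comp measurable_snd)
  have hG : Measurable fun p : ℝ × (ℝ × ℝ) =>
      ({p : ℝ × (ℝ × ℝ) | p.1 < f p.2}).indicator (fun q => c q.2) p :=
    (hc.comp measurable_snd).indicator hset
  calc ∫⁻ z in A, ENNReal.ofReal (f z) * c z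
      = ∫⁻ z in A, ∫⁻ s in Ioi (0:ℝ),
          ({p : ℝ × (ℝ × ℝ) | p.1 < f p.2}).indicator (fun q => c q.2) (s, z) := by
        refine lintegral_congr fun z => ?_
        have hind : ∀ s : ℝ, ({p : ℝ × (ℝ × ℝ) | p.1 < f p.2}).indicator
            (fun q => c q.2) (s, z) = (Iio (f z)).indicator (fun _ => c z) s := by
          intro s
          by_cases h : s < f z <;> simp [Set.indicator, h]
        simp_rw [hind]
        rw [lintegral_indicator measurableSet_Iio,
          Measure.restrict_restrict measurableSet_Iio, lintegral_const,
          Measure.restrict_apply_univ, Set.Iio_inter_Ioi, Real.volume_Ioo, sub_zero, mul_comm]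
    _ = ∫⁻ s in Ioi (0:ℝ), ∫⁻ z in A,
          ({p : ℝ × (ℝ × ℝ) | p.1 < f p.2}).indicator (fun q => c q.2) (s, z) :=
        (lintegral_lintegral_swap hG.aemeasurable).symm
    _ = ∫⁻ s in Ioi (0:ℝ), ∫⁻ z in A ∩ {z | s < f z}, c z := by
        refine lintegral_congr fun s => ?_
        have hind : ∀ z : ℝ × ℝ, ({p : ℝ × (ℝ × ℝ) | p.1 < f p.2}).indicator
            (fun q => c q.2) (s, z) = ({z : ℝ × ℝ | s < f z}).indicator c z := by
          intro z
          by_cases h : s < f z <;> simp [Set.indicator, h]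
        simp_rw [hind]
        rw [lintegral_indicator (measurableSet_lt measurable_const hf),
          Measure.restrict_restrict (measurableSet_lt measurable_const hf), inter_comm]

/-- Plain layer-cake. -/
lemma layercake {A : Set (ℝ × ℝ)} (hA : MeasurableSet A) {f : ℝ × ℝ → ℝ}
    (hf : Measurable f) :
    ∫⁻ z in A, ENNReal.ofReal (f z) = ∫⁻ s in Ioi (0:ℝ), volume (A ∩ {z | s < f z}) := by
  have h := swapA hA hf (c := fun _ => (1 : ℝ≥0∞)) measurable_const
  simpa [setLIntegral_one] using h

/-- Double layer-cake. -/
lemma double {f g : ℝ × ℝ → ℝ} (hf : Measurable f) (hg : Measurable g) :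
    ∫⁻ z in Q, ENNReal.ofReal (f z) * ENNReal.ofReal (g z) =
      ∫⁻ s in Ioi (0:ℝ), ∫⁻ t in Ioi (0:ℝ), volume ((Q ∩ {z | s < f z}) ∩ {z | t < g z}) := by
  rw [swapA measQ hf (hg.ennreal_ofReal)]
  exact lintegral_congr fun s =>
    layercake (measQ.inter (measurableSet_lt measurable_const hf)) hg

/-- Equality of the `q`-th power lintegrals (equimeasurability). -/
lemma lint_rpow {f : ℝ × ℝ → ℝ} (hf : Measurable f) (hfnn : ∀ z, 0 ≤ f z)
    {q : ℝ} (hq : 0 < q) :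
    ∫⁻ z in Q, ENNReal.ofReal (rearr' f z ^ q) = ∫⁻ z in Q, ENNReal.ofReal (f z ^ q) := by
  have hm1 : Measurable fun z => rearr' f z ^ q :=
    (Real.continuous_rpow_const hq.le).measurable.comp (measurable_rearr' hf hfnn)
  have hm2 : Measurable fun z => f z ^ q :=
    (Real.continuous_rpow_const hq.le).measurable.comp hf
  rw [layercake measQ hm1, layercake measQ hm2]
  refine setLIntegral_congr_fun measurableSet_Ioi (fun t ht => ?_)
  have ht0 : (0:ℝ) < t := ht
  have htp : 0 < t ^ q⁻¹ := Real.rpow_pos_of_pos ht0 _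
  have hiff : ∀ (h : ℝ × ℝ → ℝ), (∀ z, 0 ≤ h z) →
      {z : ℝ × ℝ | t < h z ^ q} = {z : ℝ × ℝ | t ^ q⁻¹ < h z} := by
    intro h hnn
    ext z
    simp only [mem_setOf_eq]
    constructor
    · intro hlt
      have h2 := Real.rpow_lt_rpow ht0.le hlt (by positivity : (0:ℝ) < q⁻¹)
      rwa [Real.rpow_rpow_inv (hnn z) hq.ne'] at h2
    · intro hlt
      have h2 := Real.rpow_lt_rpow htp.le hlt hq
      rwa [Real.rpow_inv_rpow ht0.le hq.ne'] at h2
  rw [hiff (rearr' f) (rearr'_nonneg hfnn), hiff f hfnn]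
  exact meas_superlevel hf htp

end Stmt15Aux

open Stmt15Aux Set Filter ENNReal

/-- Rearrangement inequality: `E[W·U] ≤ E[W*·U*]` for nonnegative `W ∈ Lᵖ`,
`U ∈ Lᵖ'`, `1/p + 1/p' = 1`. -/
theorem stmt15 (W U : ℝ × ℝ → ℝ) (hWm : Measurable W) (hUm : Measurable U)
    (hWnn : ∀ z, 0 ≤ W z) (hUnn : ∀ z, 0 ≤ U z)
    (p p' : ℝ) (hp : 1 ≤ p) (hp' : 1 ≤ p') (hconj : 1/p + 1/p' = 1)
    (hWp : IntegrableOn (fun z => W z ^ p) (Set.Icc (0:ℝ) 1 ×ˢ Set.Icc (0:ℝ) 1))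
    (hUp : IntegrableOn (fun z => U z ^ p') (Set.Icc (0:ℝ) 1 ×ˢ Set.Icc (0:ℝ) 1)) :
    (∫ z in Set.Icc (0:ℝ) 1 ×ˢ Set.Icc (0:ℝ) 1, W z * U z) ≤
      ∫ z in Set.Icc (0:ℝ) 1 ×ˢ Set.Icc (0:ℝ) 1, rearr W z * rearr U z := by
  classical
  -- conjugate exponents
  have hp0 : (0:ℝ) < p := lt_of_lt_of_le one_pos hp
  have hp'0 : (0:ℝ) < p' := lt_of_lt_of_le one_pos hp'
  have hp1 : 1 < p := by
    by_contra h
    push_neg at h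
    have hpe : p = 1 := le_antisymm h hp
    rw [hpe] at hconj
    have h1 : (0:ℝ) < 1/p' := by positivity
    norm_num at hconj
    linarith
  have hp'1 : 1 < p' := by
    by_contra h
    push_neg at h
    have hpe : p' = 1 := le_antisymm h hp'
    rw [hpe] at hconj
    have h1 : (0:ℝ) < 1/p := by positivity
    norm_num at hconj
    linarith
  have hconjExp : Real.HolderConjugate p p' := Real.holderConjugate_iff.2 ⟨hp1, by simpa [one_div] using hconj⟩
  -- notation
  have hmW : Measurable (rearr' W) := measurable_rearr' hWm hWnn
  have hmU : Measurable (rearr' U) := measurable_rearr' hUm hUnn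
  set L : ℝ≥0∞ := ∫⁻ z in Q, ENNReal.ofReal (W z) * ENNReal.ofReal (U z) with hL
  set R : ℝ≥0∞ := ∫⁻ z in Q, ENNReal.ofReal (rearr' W z) * ENNReal.ofReal (rearr' U z) with hR
  -- the main inequality between lintegrals
  have hLR : L ≤ R := by
    rw [hL, hR, double hWm hUm, double hmW hmU]
    calc ∫⁻ s in Ioi (0:ℝ), ∫⁻ t in Ioi (0:ℝ), volume ((Q ∩ {z | s < W z}) ∩ {z | t < U z})
        ≤ ∫⁻ s in Ioi (0:ℝ), ∫⁻ t in Ioi (0:ℝ), min (muf W s) (muf U t) := by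
          refine lintegral_mono fun s => lintegral_mono fun t => le_min ?_ ?_
          · exact measure_mono (fun z hz => hz.1)
          · exact measure_mono (fun z hz => ⟨hz.1.1, hz.2⟩)
      _ = ∫⁻ s in Ioi (0:ℝ), ∫⁻ t in Ioi (0:ℝ),
            volume ((Q ∩ {z | s < rearr' W z}) ∩ {z | t < rearr' U z}) := by
          refine setLIntegral_congr_fun measurableSet_Ioi (fun s hs => ?_)
          refine setLIntegral_congr_fun measurableSet_Ioi (fun t ht => ?_)
          rw [inter_assoc]
          exact (meas_superlevel₂ hWm hUm hs ht).symm
  -- finiteness of the right-hand side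
  have hAfin : (∫⁻ z in Q, ENNReal.ofReal (rearr' W z) ^ p) ≠ ⊤ := by
    have h1 : (∫⁻ z in Q, ENNReal.ofReal (rearr' W z) ^ p)
        = ∫⁻ z in Q, ENNReal.ofReal (W z ^ p) := by
      rw [← lint_rpow hWm hWnn hp0]
      exact lintegral_congr fun z =>
        ENNReal.ofReal_rpow_of_nonneg (rearr'_nonneg hWnn z) hp0.le
    rw [h1]
    have h2 : (∫⁻ z in Q, ENNReal.ofReal (W z ^ p)) ≤ ∫⁻ z in Q, (‖W z ^ p‖₊ : ℝ≥0∞) :=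
      lintegral_mono fun z => Real.ofReal_le_enorm _
    exact (lt_of_le_of_lt h2 hWp.2).ne
  have hBfin : (∫⁻ z in Q, ENNReal.ofReal (rearr' U z) ^ p') ≠ ⊤ := by
    have h1 : (∫⁻ z in Q, ENNReal.ofReal (rearr' U z) ^ p')
        = ∫⁻ z in Q, ENNReal.ofReal (U z ^ p') := by
      rw [← lint_rpow hUm hUnn hp'0]
      exact lintegral_congr fun z =>
        ENNReal.ofReal_rpow_of_nonneg (rearr'_nonneg hUnn z) hp'0.le
    rw [h1]
    have h2 : (∫⁻ z in Q, ENNReal.ofReal (U z ^ p')) ≤ ∫⁻ z in Q, (‖U z ^ p'‖₊ : ℝ≥0∞) :=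
      lintegral_mono fun z => Real.ofReal_le_enorm _
    exact (lt_of_le_of_lt h2 hUp.2).ne
  have hRfin : R ≠ ⊤ := by
    have hHold := ENNReal.lintegral_mul_le_Lp_mul_Lq (volume.restrict Q) hconjExp
      (hmW.ennreal_ofReal.aemeasurable) (hmU.ennreal_ofReal.aemeasurable)
    have hR' : R ≤ (∫⁻ z in Q, ENNReal.ofReal (rearr' W z) ^ p) ^ (1/p) *
        (∫⁻ z in Q, ENNReal.ofReal (rearr' U z) ^ p') ^ (1/p') := hHold
    exact ne_top_of_le_ne_top
      (ENNReal.mul_ne_top (ENNReal.rpow_ne_top_of_nonneg (by positivity) hAfin)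
        (ENNReal.rpow_ne_top_of_nonneg (by positivity) hBfin)) hR'
  -- convert both sides of the goal to lintegrals
  have hLHS : (∫ z in Q, W z * U z) = L.toReal := by
    rw [integral_eq_lintegral_of_nonneg_ae
      (ae_of_all _ fun z => mul_nonneg (hWnn z) (hUnn z))
      ((hWm.mul hUm).aestronglyMeasurable), hL]
    congr 1
    exact lintegral_congr fun z => ENNReal.ofReal_mul (hWnn z)
  have hae : (fun z => rearr W z * rearr U z)
      =ᵐ[volume.restrict Q] fun z => rearr' W z * rearr' U z := by
    refine (ae_restrict_iff' measQ).2 ?_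
    rw [MeasureTheory.ae_iff]
    refine measure_mono_null (fun z hz => ?_) (?_ : volume {((0:ℝ),(0:ℝ))} = 0)
    · have hz' : ¬ (z ∈ Q → rearr W z * rearr U z = rearr' W z * rearr' U z) := hz
      obtain ⟨hzQ, hne⟩ := _root_.not_imp.1 hz'
      by_cases hmax : max z.1 z.2 ≤ 0
      · have h1 : z.1 = 0 :=
          le_antisymm (le_trans (le_max_left _ _) hmax) hzQ.1.1
        have h2 : z.2 = 0 :=
          le_antisymm (le_trans (le_max_right _ _) hmax) hzQ.2.1
        simp [Set.mem_singleton_iff, Prod.ext_iff, h1, h2]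
      · exact absurd (by rw [rearr'_eq hmax, rearr'_eq hmax]) hne
    · rw [← Set.singleton_prod_singleton]
      simp [Measure.volume_eq_prod, Measure.prod_prod]
  have hRHS : (∫ z in Q, rearr W z * rearr U z) = R.toReal := by
    rw [integral_congr_ae hae,
      integral_eq_lintegral_of_nonneg_ae
        (ae_of_all _ fun z => mul_nonneg (rearr'_nonneg hWnn z) (rearr'_nonneg hUnn z))
        ((hmW.mul hmU).aestronglyMeasurable), hR]
    congr 1
    exact lintegral_congr fun z => ENNReal.ofReal_mul (rearr'_nonneg hWnn z)
  show (∫ z in Q, W z * U z) ≤ ∫ z in Q, rearr W z * rearr U z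
  rw [hLHS, hRHS]
  exact ENNReal.toReal_mono hRfin hLR
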